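/- Under the update sequence where the minimum-opinion agent always updates, the set S(t) = {i : x_i(t) < m + (1/k)(y(0) − m)}, where m = x_{μ(x(0))}(0) and y(0) = max_{i∈N_{μ(x(0))}} x_i(0), satisfies: either S(t) = ∅ or |S(t+1)| = |S(t)| − 1; since |S(0)| ≤ k − 1, the set S(k−1) is empty. -/

import Mathlib

open scoped Classical
open Finset

noncomputable def nearList {n : ℕ} (x : Fin n → ℝ) (i : Fin n) : List (Fin n) :=
  @List.insertionSort (Fin n)
    (fun j j' => |x j - x i| < |x j' - x i| ∨ (|x j - x i| = |x j' - x i| ∧ j ≤ j'))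
    (Classical.decRel _) (List.finRange n)

/-- The set of the `k` agents nearest to `i` in opinion distance (ties broken by lower index). -/
noncomputable def nbr {n : ℕ} (k : ℕ) (x : Fin n → ℝ) (i : Fin n) : Finset (Fin n) :=
  ((nearList x i).take k).toFinset

/-- The asynchronous update `f(x,i)`. -/
noncomputable def upd {n : ℕ} (k : ℕ) (x : Fin n → ℝ) (i : Fin n) : Fin n → ℝ :=
  Function.update x i ((∑ j ∈ nbr k x i, x j) / k)

/-- A configuration is clustered if all neighbors of every agent share its opinion. -/
def Clustered {n : ℕ} (k : ℕ) (x : Fin n → ℝ) : Prop :=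
  ∀ i : Fin n, ∀ j ∈ nbr k x i, x j = x i

/-- `μ(x)`: lowest index attaining the minimum. -/
noncomputable def argminIdx {n : ℕ} [NeZero n] (x : Fin n → ℝ) : Fin n :=
  (Finset.univ.filter fun i => ∀ j, x i ≤ x j).min' (by
    obtain ⟨i, -, hi⟩ := Finset.exists_min_image Finset.univ x Finset.univ_nonempty
    exact ⟨i, Finset.mem_filter.mpr ⟨Finset.mem_univ _, fun j => hi j (Finset.mem_univ j)⟩⟩)

/-- `M(x)`: lowest index attaining the maximum. -/
noncomputable def argmaxIdx {n : ℕ} [NeZero n] (x : Fin n → ℝ) : Fin n :=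
  argminIdx (fun i => -x i)

/-- Trajectory of the dynamics with (possibly state-dependent) update selector `σ`. -/
noncomputable def traj {n : ℕ} (k : ℕ) (σ : ℕ → (Fin n → ℝ) → Fin n) (x0 : Fin n → ℝ) :
    ℕ → Fin n → ℝ
  | 0 => x0
  | t + 1 => upd k (traj k σ x0 t) (σ t (traj k σ x0 t))


lemma argmin_le {n : ℕ} [NeZero n] (x : Fin n → ℝ) (j : Fin n) : x (argminIdx x) ≤ x j := by
  have h : argminIdx x ∈ Finset.univ.filter fun i => ∀ j, x i ≤ x j := Finset.min'_mem _ _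
  exact (Finset.mem_filter.mp h).2 j

section rel
variable {n : ℕ} (x : Fin n → ℝ) (i : Fin n)

private def rl : Fin n → Fin n → Prop :=
  fun j j' => |x j - x i| < |x j' - x i| ∨ (|x j - x i| = |x j' - x i| ∧ j ≤ j')

instance : IsTotal (Fin n) (rl x i) := ⟨by
  intro a b
  rcases lt_trichotomy (|x a - x i|) (|x b - x i|) with h | h | h
  · exact Or.inl (Or.inl h)
  · rcases le_total a b with hab | hab
    · exact Or.inl (Or.inr ⟨h, hab⟩)
    · exact Or.inr (Or.inr ⟨h.symm, hab⟩)
  · exact Or.inr (Or.inl h)⟩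

instance : IsTrans (Fin n) (rl x i) := ⟨by
  rintro a b c (h1 | ⟨h1, h1'⟩) (h2 | ⟨h2, h2'⟩)
  · exact Or.inl (h1.trans h2)
  · exact Or.inl (h2 ▸ h1)
  · exact Or.inl (h1 ▸ h2)
  · exact Or.inr ⟨h1.trans h2, h1'.trans h2'⟩⟩

lemma nearList_eq : nearList x i = List.insertionSort (rl x i) (List.finRange n) := by
  unfold nearList rl
  congr 1

lemma nearList_perm : (nearList x i).Perm (List.finRange n) := by
  rw [nearList_eq]; exact List.perm_insertionSort _ _

lemma nearList_sorted : (nearList x i).Pairwise (rl x i) := by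
  rw [nearList_eq]; exact List.pairwise_insertionSort _ _

lemma nearList_nodup : (nearList x i).Nodup :=
  (nearList_perm x i).nodup_iff.mpr (List.nodup_finRange n)

lemma nearList_length : (nearList x i).length = n := by
  rw [(nearList_perm x i).length_eq, List.length_finRange]

lemma nbr_card {k : ℕ} (hkn : k ≤ n) : (nbr k x i).card = k := by
  rw [nbr, List.toFinset_card_of_nodup (List.Nodup.sublist (List.take_sublist _ _) (nearList_nodup x i)),
    List.length_take, nearList_length]
  omega

lemma cross {k : ℕ} {a j : Fin n} (ha : a ∈ nbr k x i) (hj : j ∉ nbr k x i) : rl x i a j := by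
  have hmem : j ∈ (nearList x i).take k ++ (nearList x i).drop k := by
    rw [List.take_append_drop]
    exact (nearList_perm x i).mem_iff.mpr (List.mem_finRange j)
  have hj' : j ∈ (nearList x i).drop k := by
    rcases List.mem_append.mp hmem with h | h
    · exact absurd (List.mem_toFinset.mpr h) hj
    · exact h
  have hs : ((nearList x i).take k ++ (nearList x i).drop k).Pairwise (rl x i) := by
    rw [List.take_append_drop]; exact nearList_sorted x i
  exact (List.pairwise_append.mp hs).2.2 a (List.mem_toFinset.mp ha) j hj'

end rel

lemma rl_value {n : ℕ} {x : Fin n → ℝ} {i : Fin n} (hmin : ∀ p, x i ≤ x p) {a b : Fin n}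
    (h : rl x i a b) : x a ≤ x b := by
  have ha : |x a - x i| = x a - x i := abs_of_nonneg (sub_nonneg.mpr (hmin a))
  have hb : |x b - x i| = x b - x i := abs_of_nonneg (sub_nonneg.mpr (hmin b))
  rcases h with h | ⟨h, -⟩
  · rw [ha, hb] at h; linarith
  · rw [ha, hb] at h; linarith


/-- when the minimum-opinion agent always updates, the set of agents below
the threshold `m + (1/k)(y(0) - m)` loses one element per step (unless empty), starts with
at most `k-1` elements and is empty at time `k-1`. -/
theorem min_update_S_empties {n k : ℕ} [NeZero n] (hk : 1 ≤ k) (hkn : k ≤ n)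
    (x0 : Fin n → ℝ) (X : ℕ → Fin n → ℝ)
    (hX : X = traj k (fun _ x => argminIdx x) x0)
    (y0 : ℝ) (hy0 : y0 = sSup (x0 '' (nbr k x0 (argminIdx x0) : Set (Fin n))))
    (S : ℕ → Finset (Fin n))
    (hS : ∀ t, S t = Finset.univ.filter fun i =>
      X t i < x0 (argminIdx x0) + (1 / (k : ℝ)) * (y0 - x0 (argminIdx x0))) :
    (∀ t, S t = ∅ ∨ (S (t + 1)).card = (S t).card - 1) ∧
    (S 0).card ≤ k - 1 ∧ S (k - 1) = ∅ := by
  have hX0 : X 0 = x0 := by rw [hX]; rfl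
  have hXs : ∀ t, X (t+1) = upd k (X t) (argminIdx (X t)) := by
    intro t; rw [hX]; rfl
  have hkpos : (0:ℝ) < k := by exact_mod_cast hk
  set μ0 := argminIdx x0 with hμ0
  set m := x0 μ0 with hm
  set T := m + (1 / (k : ℝ)) * (y0 - m) with hT
  set B := nbr k x0 μ0 with hB
  have hBcard : B.card = k := nbr_card x0 μ0 hkn
  have hBne : B.Nonempty := Finset.card_pos.mp (by omega)
  have hmle : ∀ j, m ≤ x0 j := argmin_le x0
  -- y0 attained in B
  have himg : (x0 '' (B : Set (Fin n))).Finite := (B.finite_toSet).image x0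
  have himgne : (x0 '' (B : Set (Fin n))).Nonempty := (hBne.to_set).image x0
  have hy0mem : y0 ∈ x0 '' (B : Set (Fin n)) := by
    rw [hy0]; exact Set.Nonempty.csSup_mem himgne himg
  obtain ⟨a0, ha0B, ha0⟩ := hy0mem
  have ha0B' : a0 ∈ B := ha0B
  have hub : ∀ b ∈ B, x0 b ≤ y0 := by
    intro b hb
    rw [hy0]
    exact le_csSup himg.bddAbove ⟨b, hb, rfl⟩
  have hout : ∀ j, j ∉ B → y0 ≤ x0 j := by
    intro j hj
    rw [← ha0]
    exact rl_value hmle (cross x0 μ0 ha0B' hj)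
  have hmy0 : m ≤ y0 := ha0 ▸ hmle a0
  have hkT : (k : ℝ) * T = (k - 1) * m + y0 := by
    rw [hT]; field_simp; ring
  have hTy0 : T ≤ y0 := by
    rw [hT]
    have h1k : (1 / (k:ℝ)) ≤ 1 := by
      rw [div_le_one hkpos]; exact_mod_cast hk
    nlinarith
  -- sum of B is at least k*T
  have hsumB : (k:ℝ) * T ≤ ∑ j ∈ B, x0 j := by
    rw [hkT, ← Finset.sum_erase_add B x0 ha0B', ha0]
    have : ((k:ℝ) - 1) * m ≤ ∑ j ∈ (B.erase a0), x0 j := by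
      have hc : ((B.erase a0).card : ℝ) = (k:ℝ) - 1 := by
        rw [Finset.card_erase_of_mem ha0B', hBcard]
        have : (1:ℕ) ≤ k := hk
        push_cast [Nat.cast_sub hk]; ring
      calc ((k:ℝ) - 1) * m = (B.erase a0).card • m := by rw [nsmul_eq_mul, hc]
        _ ≤ ∑ j ∈ (B.erase a0), x0 j :=
          Finset.card_nsmul_le_sum _ _ _ (fun j _ => hmle j)
    linarith
  -- the key invariant: every k-subset has sum ≥ k*T
  have hmono : ∀ t j, X t j ≤ X (t+1) j := by
    intro t j
    rw [hXs t, upd]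
    by_cases heq : j = argminIdx (X t)
    · rw [heq, Function.update_self, le_div_iff₀ hkpos]
      have hb : (nbr k (X t) (argminIdx (X t))).card • X t (argminIdx (X t)) ≤
          ∑ p ∈ nbr k (X t) (argminIdx (X t)), X t p :=
        Finset.card_nsmul_le_sum _ _ _ (fun p _ => argmin_le (X t) p)
      rw [nbr_card _ _ hkn, nsmul_eq_mul] at hb
      linarith
    · rw [Function.update_of_ne heq]
  have hV : ∀ t, ∀ A : Finset (Fin n), A.card = k → (k:ℝ) * T ≤ ∑ j ∈ A, X t j := by
    intro t
    induction t with
    | zero =>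
      intro A hA
      have key : ∑ j ∈ B, x0 j ≤ ∑ j ∈ A, x0 j := by
        have hsplitA : ∑ j ∈ A, x0 j = ∑ j ∈ A ∩ B, x0 j + ∑ j ∈ A \ B, x0 j := by
          rw [← Finset.sum_sdiff (Finset.inter_subset_left), Finset.sdiff_inter_self_left]
          ring
        have hsplitB : ∑ j ∈ B, x0 j = ∑ j ∈ A ∩ B, x0 j + ∑ j ∈ B \ A, x0 j := by
          rw [← Finset.sum_sdiff (Finset.inter_subset_left : B ∩ A ⊆ B),
            Finset.sdiff_inter_self_left, Finset.inter_comm]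
          ring
        have hcards : (A \ B).card = (B \ A).card := by
          have h1 := Finset.card_sdiff_add_card_inter A B
          have h2 := Finset.card_sdiff_add_card_inter B A
          rw [Finset.inter_comm] at h2
          omega
        have h1 : ∑ j ∈ B \ A, x0 j ≤ (B \ A).card • y0 := by
          apply Finset.sum_le_card_nsmul
          intro j hj
          exact hub j (Finset.mem_sdiff.mp hj).1
        have h2 : (A \ B).card • y0 ≤ ∑ j ∈ A \ B, x0 j := by
          apply Finset.card_nsmul_le_sum
          intro j hj
          exact hout j (Finset.mem_sdiff.mp hj).2
        rw [nsmul_eq_mul] at h1 h2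
        have hn : ((B \ A).card : ℝ) * y0 = ((A \ B).card : ℝ) * y0 := by rw [hcards]
        rw [hsplitA, hsplitB]
        linarith
      calc (k:ℝ) * T ≤ ∑ j ∈ B, x0 j := hsumB
        _ ≤ ∑ j ∈ A, x0 j := key
        _ = ∑ j ∈ A, X 0 j := by rw [hX0]
    | succ t ih =>
      intro A hA
      exact (ih A hA).trans (Finset.sum_le_sum fun j _ => hmono t j)
  -- the min agent's new value is ≥ T
  have hnew : ∀ t, T ≤ X (t+1) (argminIdx (X t)) := by
    intro t
    rw [hXs t, upd, Function.update_self, le_div_iff₀ hkpos]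
    have := hV t (nbr k (X t) (argminIdx (X t))) (nbr_card _ _ hkn)
    linarith
  -- step structure
  have hstep : ∀ t, S (t+1) = (S t).erase (argminIdx (X t)) := by
    intro t
    ext j
    rw [hS (t+1), hS t, Finset.mem_erase, Finset.mem_filter, Finset.mem_filter]
    constructor
    · rintro ⟨-, hj⟩
      rcases eq_or_ne j (argminIdx (X t)) with rfl | hne
      · exact absurd hj (not_lt.mpr (hnew t))
      · refine ⟨hne, Finset.mem_univ _, ?_⟩
        rwa [hXs t, upd, Function.update_of_ne hne] at hj
    · rintro ⟨hne, -, hj⟩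
      refine ⟨Finset.mem_univ _, ?_⟩
      rwa [hXs t, upd, Function.update_of_ne hne]
  have hmemmin : ∀ t, (S t).Nonempty → argminIdx (X t) ∈ S t := by
    rintro t ⟨j, hj⟩
    rw [hS t, Finset.mem_filter] at hj ⊢
    exact ⟨Finset.mem_univ _, lt_of_le_of_lt (argmin_le (X t) j) hj.2⟩
  refine ⟨?_, ?_, ?_⟩
  · intro t
    by_cases h : S t = ∅
    · exact Or.inl h
    · right
      rw [hstep t, Finset.card_erase_of_mem (hmemmin t (Finset.nonempty_of_ne_empty h))]
  · -- |S 0| ≤ k - 1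
    have hsub : S 0 ⊆ B := by
      intro j hj
      rw [hS 0, Finset.mem_filter, hX0] at hj
      by_contra hjB
      exact absurd hj.2 (not_lt.mpr (hTy0.trans (hout j hjB)))
    have hssub : S 0 ⊂ B := by
      refine ⟨hsub, fun hBs => ?_⟩
      have := hBs ha0B'
      rw [hS 0, Finset.mem_filter, hX0, ha0] at this
      exact absurd this.2 (not_lt.mpr hTy0)
    have := Finset.card_lt_card hssub
    omega
  · -- S (k-1) = ∅
    have hcard : ∀ t, (S t).card ≤ k - 1 - t := by
      intro t
      induction t with
      | zero =>
        have hsub : S 0 ⊆ B := by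
          intro j hj
          rw [hS 0, Finset.mem_filter, hX0] at hj
          by_contra hjB
          exact absurd hj.2 (not_lt.mpr (hTy0.trans (hout j hjB)))
        have hssub : S 0 ⊂ B := by
          refine ⟨hsub, fun hBs => ?_⟩
          have := hBs ha0B'
          rw [hS 0, Finset.mem_filter, hX0, ha0] at this
          exact absurd this.2 (not_lt.mpr hTy0)
        have := Finset.card_lt_card hssub
        omega
      | succ t ih =>
        rw [hstep t]
        by_cases h : S t = ∅
        · simp [h]
        · rw [Finset.card_erase_of_mem (hmemmin t (Finset.nonempty_of_ne_empty h))]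
          have : 1 ≤ (S t).card := Finset.card_pos.mpr (Finset.nonempty_of_ne_empty h)
          omega
    have := hcard (k-1)
    rw [Nat.sub_self] at this
    exact Finset.card_eq_zero.mp (Nat.le_zero.mp this)
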